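/- Let L₁, L₂ ⊂ ℝᵈ be incommensurate lattices with unit cells Γ₁, Γ₂ and let the wavevector set W_E = {G_{1m} + G_{2n} : |G_{1m}|² + |G_{2n}|² ≤ 2E} be generated by an energy cutoff E > 0. Then W_E is finite, and if N₁(E) denotes the number of elements of W_E lying in the reciprocal unit cell Γ₁* and N₂(E) the number lying in Γ₂*, then N₁(E)/N₂(E) → |Γ₁*|/|Γ₂*| = |Γ₂|/|Γ₁| as E → ∞. -/

import Mathlib

open Filter

/-- The reciprocal lattice `{2π A⁻ᵀ n : n ∈ ℤᵈ}` of the Bravais lattice `A ℤᵈ`. -/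
def recLat {d : ℕ} (A : Matrix (Fin d) (Fin d) ℝ) : Set (Fin d → ℝ) :=
  {x | ∃ n : Fin d → ℤ, x = (2 * Real.pi) • (A⁻¹).transpose.mulVec (fun i => (n i : ℝ))}

/-- Two lattices are incommensurate if the only translation preserving the union of their
reciprocal lattices is zero. -/
def Incommensurate {d : ℕ} (A₁ A₂ : Matrix (Fin d) (Fin d) ℝ) : Prop :=
  ∀ τ : Fin d → ℝ,
    Set.image (fun x => x + τ) (recLat A₁ ∪ recLat A₂) = recLat A₁ ∪ recLat A₂ → τ = 0

/-- The reciprocal lattice vector `G_m = 2π A⁻ᵀ m`. -/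
noncomputable def Gvec {d : ℕ} (A : Matrix (Fin d) (Fin d) ℝ) (m : Fin d → ℤ) :
    Fin d → ℝ :=
  (2 * Real.pi) • (A⁻¹).transpose.mulVec (fun i => (m i : ℝ))

/-- Squared Euclidean norm on `Fin d → ℝ`. -/
def sqNorm {d : ℕ} (v : Fin d → ℝ) : ℝ := ∑ i, v i ^ 2

/-- The reciprocal unit cell `Γ* = 2π A⁻ᵀ [0,1)ᵈ`. -/
def recUnitCell {d : ℕ} (A : Matrix (Fin d) (Fin d) ℝ) : Set (Fin d → ℝ) :=
  {x | ∃ α : Fin d → ℝ, (∀ i, α i ∈ Set.Ico (0:ℝ) 1) ∧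
    x = (2 * Real.pi) • (A⁻¹).transpose.mulVec α}

/-- The wavevector set generated by an energy cutoff `E`. -/
def cutoffSet {d : ℕ} (A₁ A₂ : Matrix (Fin d) (Fin d) ℝ) (E : ℝ) : Set (Fin d → ℝ) :=
  {x | ∃ m n : Fin d → ℤ, x = Gvec A₁ m + Gvec A₂ n ∧
    sqNorm (Gvec A₁ m) + sqNorm (Gvec A₂ n) ≤ 2 * E}


namespace CutoffProof
open MeasureTheory Pointwise
variable {d : ℕ}

noncomputable def e (v : Fin d → ℝ) : ℝ := Real.sqrt (∑ i, v i ^ 2)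

lemma e_eq_norm (v : Fin d → ℝ) :
    e v = ‖((WithLp.equiv 2 (Fin d → ℝ)).symm v : EuclideanSpace ℝ (Fin d))‖ := by
  rw [EuclideanSpace.norm_eq]
  simp [e, sq_abs]

lemma e_nonneg (v : Fin d → ℝ) : 0 ≤ e v := Real.sqrt_nonneg _

lemma e_add_le (u v : Fin d → ℝ) : e (u + v) ≤ e u + e v := by
  simp only [e_eq_norm]
  rw [show (WithLp.equiv 2 (Fin d → ℝ)).symm (u + v)
      = (WithLp.equiv 2 (Fin d → ℝ)).symm u + (WithLp.equiv 2 (Fin d → ℝ)).symm v by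
    apply (WithLp.equiv 2 (Fin d → ℝ)).injective; simp]
  exact norm_add_le _ _

lemma e_neg (v : Fin d → ℝ) : e (-v) = e v := by simp [e]

lemma e_sub_le (u v : Fin d → ℝ) : e (u - v) ≤ e u + e v := by
  rw [sub_eq_add_neg]
  simpa [e_neg] using e_add_le u (-v)

lemma sq_e (v : Fin d → ℝ) : e v ^ 2 = ∑ i, v i ^ 2 :=
  Real.sq_sqrt (Finset.sum_nonneg fun i _ => sq_nonneg _)

lemma abs_le_e (v : Fin d → ℝ) (i : Fin d) : |v i| ≤ e v := by
  rw [e, ← Real.sqrt_sq_eq_abs]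
  apply Real.sqrt_le_sqrt
  exact Finset.single_le_sum (f := fun j => v j ^ 2) (fun j _ => sq_nonneg _) (Finset.mem_univ i)

lemma e_le_sum_abs (v : Fin d → ℝ) : e v ≤ ∑ i, |v i| := by
  rw [e, show (∑ i, v i ^ 2) = ∑ i, |v i| ^2 by simp [sq_abs]]
  calc Real.sqrt (∑ i, |v i| ^ 2) ≤ Real.sqrt ((∑ i, |v i|) ^ 2) := by
        apply Real.sqrt_le_sqrt
        exact Finset.sum_sq_le_sq_sum_of_nonneg (fun i _ => abs_nonneg _)
    _ = ∑ i, |v i| := Real.sqrt_sq (Finset.sum_nonneg fun i _ => abs_nonneg _)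

lemma e_smul (c : ℝ) (v : Fin d → ℝ) : e (c • v) = |c| * e v := by
  simp only [e_eq_norm]
  rw [show (WithLp.equiv 2 (Fin d → ℝ)).symm (c • v)
      = c • (WithLp.equiv 2 (Fin d → ℝ)).symm v by
    apply (WithLp.equiv 2 (Fin d → ℝ)).injective; simp]
  rw [norm_smul, Real.norm_eq_abs]


/-- row-sum bound for a matrix -/

noncomputable def rsum (B : Matrix (Fin d) (Fin d) ℝ) : ℝ := ∑ i, ∑ j, |B i j|

lemma rsum_nonneg (B : Matrix (Fin d) (Fin d) ℝ) : 0 ≤ rsum B :=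
  Finset.sum_nonneg fun i _ => Finset.sum_nonneg fun j _ => abs_nonneg _



lemma e_mulVec_le (B : Matrix (Fin d) (Fin d) ℝ) (x : Fin d → ℝ) (hx : ∀ i, |x i| ≤ 1) :
    e (B.mulVec x) ≤ rsum B := by
  refine (e_le_sum_abs _).trans ?_
  apply Finset.sum_le_sum
  intro i _
  calc |B.mulVec x i| = |∑ j, B i j * x j| := by rw [Matrix.mulVec]; rfl
    _ ≤ ∑ j, |B i j * x j| := Finset.abs_sum_le_sum_abs _ _
    _ ≤ ∑ j, |B i j| := by
        apply Finset.sum_le_sum; intro j _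
        rw [abs_mul]
        exact mul_le_of_le_one_right (abs_nonneg _) (hx j)

/-- the lattice points with `e (B n) ≤ r` -/
def latSet (B : Matrix (Fin d) (Fin d) ℝ) (r : ℝ) : Set (Fin d → ℤ) :=
  {n | e (B.mulVec fun i => (n i : ℝ)) ≤ r}

lemma latSet_finite (B : Matrix (Fin d) (Fin d) ℝ) (hB : IsUnit B.det) (r : ℝ) :
    (latSet B r).Finite := by
  set C := rsum B⁻¹ with hC
  have key : ∀ n ∈ latSet B r, ∀ i, |(n i : ℝ)| ≤ C * max r 0 := by
    intro n hn i
    have hrec : (fun i => (n i : ℝ)) = B⁻¹.mulVec (B.mulVec fun i => (n i : ℝ)) := by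
      rw [Matrix.mulVec_mulVec, Matrix.nonsing_inv_mul B hB, Matrix.one_mulVec]
    have h1 : |(n i : ℝ)| ≤ ∑ j, |B⁻¹ i j| * |B.mulVec (fun i => (n i : ℝ)) j| := by
      rw [show |(n i : ℝ)| = |B⁻¹.mulVec (B.mulVec fun i => (n i : ℝ)) i| by
        rw [← hrec]]
      calc |B⁻¹.mulVec (B.mulVec fun i => (n i : ℝ)) i|
          = |∑ j, B⁻¹ i j * (B.mulVec fun i => (n i : ℝ)) j| := by rw [Matrix.mulVec]; rfl
        _ ≤ ∑ j, |B⁻¹ i j * (B.mulVec fun i => (n i : ℝ)) j| := Finset.abs_sum_le_sum_abs _ _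
        _ = ∑ j, |B⁻¹ i j| * |(B.mulVec fun i => (n i : ℝ)) j| := by simp [abs_mul]
    refine h1.trans ?_
    have h2 : ∀ j, |(B.mulVec fun i => (n i : ℝ)) j| ≤ max r 0 := by
      intro j
      exact (abs_le_e _ j).trans (le_max_of_le_left hn)
    calc ∑ j, |B⁻¹ i j| * |(B.mulVec fun i => (n i : ℝ)) j|
        ≤ ∑ j, |B⁻¹ i j| * max r 0 := by
          apply Finset.sum_le_sum; intro j _
          exact mul_le_mul_of_nonneg_left (h2 j) (abs_nonneg _)
      _ = (∑ j, |B⁻¹ i j|) * max r 0 := by rw [← Finset.sum_mul]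
      _ ≤ C * max r 0 := by
          apply mul_le_mul_of_nonneg_right _ (le_max_right _ _)
          rw [hC, rsum]
          exact Finset.single_le_sum (f := fun i => ∑ j, |B⁻¹ i j|)
            (fun i _ => Finset.sum_nonneg fun j _ => abs_nonneg _) (Finset.mem_univ i)
  set M : ℤ := ⌈C * max r 0⌉ with hM
  apply Set.Finite.subset (Set.finite_Icc (fun _ : Fin d => -M) (fun _ => M))
  intro n hn
  constructor <;> intro i
  · have := key n hn i
    have : -(C * max r 0) ≤ (n i : ℝ) := neg_le_of_abs_le this
    have h3 : ((-M : ℤ) : ℝ) ≤ (n i : ℝ) := by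
      push_cast
      refine le_trans ?_ this
      simp only [neg_le_neg_iff]
      exact Int.le_ceil _
    exact_mod_cast h3
  · have := key n hn i
    have : (n i : ℝ) ≤ C * max r 0 := le_of_abs_le this
    have h3 : (n i : ℝ) ≤ ((M : ℤ) : ℝ) := this.trans (Int.le_ceil _)
    exact_mod_cast h3

/-- the half-open unit cube based at an integer point -/
def cube (n : Fin d → ℤ) : Set (Fin d → ℝ) :=
  Set.univ.pi fun i => Set.Ico (n i : ℝ) ((n i : ℝ) + 1)

lemma cube_measurable (n : Fin d → ℤ) : MeasurableSet (cube n) :=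
  MeasurableSet.univ_pi fun i => measurableSet_Ico

lemma volume_cube (n : Fin d → ℤ) : volume (cube n) = 1 := by
  rw [cube, volume_pi_pi]
  simp

lemma mem_cube_iff_floor (n : Fin d → ℤ) (x : Fin d → ℝ) :
    x ∈ cube n ↔ ∀ i, ⌊x i⌋ = n i := by
  simp only [cube, Set.mem_pi, Set.mem_univ, forall_true_left, Set.mem_Ico]
  constructor
  · intro h i
    exact Int.floor_eq_iff.mpr (h i)
  · intro h i
    exact Int.floor_eq_iff.mp (h i)

lemma cube_disjoint : Pairwise (Function.onFun Disjoint (cube (d := d))) := by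
  intro n m hnm
  rw [Function.onFun, Set.disjoint_left]
  intro x hx hx'
  rw [mem_cube_iff_floor] at hx hx'
  exact hnm (funext fun i => (hx i).symm.trans (hx' i))

lemma mem_cube_floor (x : Fin d → ℝ) : x ∈ cube (fun i => ⌊x i⌋) :=
  (mem_cube_iff_floor _ x).mpr fun _ => rfl

lemma volume_biUnion_cube {S : Set (Fin d → ℤ)} (hS : S.Finite) :
    volume (⋃ n ∈ S, cube n) = S.ncard := by
  classical
  rw [show (⋃ n ∈ S, cube n) = ⋃ n ∈ hS.toFinset, cube n by simp,
    measure_biUnion_finset ?_ (fun n _ => cube_measurable n)]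
  · rw [Finset.sum_congr rfl (fun n _ => volume_cube n)]
    simp [Set.ncard_eq_toFinset_card S hS]
  · intro a _ b _ hab
    exact cube_disjoint hab



def region (B : Matrix (Fin d) (Fin d) ℝ) (s : ℝ) : Set (Fin d → ℝ) :=
  {x | e (B.mulVec x) ≤ s}

noncomputable def vball (d : ℕ) : ENNReal := volume {x : Fin d → ℝ | e x ≤ 1}

lemma vball_pos (d : ℕ) : 0 < vball d := by
  have hsub : (Set.univ.pi fun _ : Fin d => Set.Ico (0:ℝ) (1/(d+1)))
      ⊆ {x : Fin d → ℝ | e x ≤ 1} := by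
    intro x hx
    simp only [Set.mem_pi, Set.mem_univ, forall_true_left, Set.mem_Ico] at hx
    have : e x ≤ ∑ i, |x i| := e_le_sum_abs x
    refine Set.mem_setOf.mpr (this.trans ?_)
    calc ∑ i, |x i| ≤ ∑ _i : Fin d, (1/(d+1) : ℝ) := by
          apply Finset.sum_le_sum
          intro i _
          rw [abs_of_nonneg (hx i).1]
          exact le_of_lt (hx i).2
      _ = d * (1/(d+1)) := by simp [Finset.sum_const, mul_comm]
      _ ≤ 1 := by
          rw [mul_one_div, div_le_one (by positivity)]
          linarith
  refine lt_of_lt_of_le ?_ (measure_mono hsub)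
  rw [volume_pi_pi]
  simp only [Real.volume_Ico, sub_zero]
  rw [Finset.prod_const]
  refine ENNReal.pow_pos ?_ _
  rw [ENNReal.ofReal_pos]
  positivity

lemma vball_lt_top (d : ℕ) : vball d < ⊤ := by
  have hsub : {x : Fin d → ℝ | e x ≤ 1}
      ⊆ Set.univ.pi fun _ : Fin d => Set.Icc (-1:ℝ) 1 := by
    intro x hx
    simp only [Set.mem_pi, Set.mem_univ, forall_true_left, Set.mem_Icc]
    intro i
    have := (abs_le_e x i).trans hx
    exact abs_le.mp this
  refine lt_of_le_of_lt (measure_mono hsub) ?_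
  rw [volume_pi_pi]
  simp only [Real.volume_Icc]
  rw [Finset.prod_const]
  exact ENNReal.pow_lt_top (by norm_num)

lemma region_smul (B : Matrix (Fin d) (Fin d) ℝ) {s : ℝ} (hs : 0 < s) :
    region B s = s • region B 1 := by
  ext x
  constructor
  · intro hx
    refine ⟨s⁻¹ • x, ?_, by simp [smul_smul, hs.ne']⟩
    simp only [region, Set.mem_setOf_eq, Matrix.mulVec_smul, e_smul,
      abs_of_nonneg (inv_nonneg.mpr hs.le)]
    rw [inv_mul_le_iff₀ hs, mul_one]
    exact hx
  · rintro ⟨y, hy, rfl⟩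
    simp only [region, Set.mem_setOf_eq, Matrix.mulVec_smul, e_smul, abs_of_nonneg hs.le]
    calc s * e (B.mulVec y) ≤ s * 1 := by
          exact mul_le_mul_of_nonneg_left hy hs.le
      _ = s := mul_one s
  
lemma volume_region_smul (B : Matrix (Fin d) (Fin d) ℝ) {s : ℝ} (hs : 0 < s) :
    volume (region B s) = ENNReal.ofReal (s ^ d) * volume (region B 1) := by
  rw [region_smul B hs, Measure.addHaar_smul]
  congr 1
  rw [Module.finrank_fintype_fun_eq_card]
  simp [abs_of_nonneg (pow_nonneg hs.le d)]

lemma region_one_eq (B : Matrix (Fin d) (Fin d) ℝ) (hB : IsUnit B.det) :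
    region B 1 = (Matrix.toLin' B⁻¹) '' {x : Fin d → ℝ | e x ≤ 1} := by
  ext x
  simp only [region, Set.mem_setOf_eq, Set.mem_image, Matrix.toLin'_apply]
  constructor
  · intro hx
    exact ⟨B.mulVec x, hx, by rw [Matrix.mulVec_mulVec, Matrix.nonsing_inv_mul B hB,
      Matrix.one_mulVec]⟩
  · rintro ⟨y, hy, rfl⟩
    rw [Matrix.mulVec_mulVec, Matrix.mul_nonsing_inv B hB, Matrix.one_mulVec]
    exact hy

lemma volume_region_one (B : Matrix (Fin d) (Fin d) ℝ) (hB : IsUnit B.det) :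
    volume (region B 1) = ENNReal.ofReal |B.det|⁻¹ * vball d := by
  rw [region_one_eq B hB, Measure.addHaar_image_linearMap, LinearMap.det_toLin',
    Matrix.det_nonsing_inv, Ring.inverse_eq_inv', abs_inv, vball]

lemma region_measurable (B : Matrix (Fin d) (Fin d) ℝ) (s : ℝ) :
    MeasurableSet (region B s) := by
  have hcont : Continuous fun x : Fin d → ℝ => e (B.mulVec x) := by
    have h1 : Continuous fun x : Fin d → ℝ => B.mulVec x :=
      (Matrix.mulVecLin B).continuous_of_finiteDimensional
    have h2 : Continuous fun v : Fin d → ℝ => e v := by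
      unfold e
      exact Real.continuous_sqrt.comp (continuous_finset_sum _ fun i _ =>
        (continuous_apply i).pow 2)
    exact h2.comp h1
  exact measurableSet_le (hcont.measurable) measurable_const

lemma biUnion_subset_region (B : Matrix (Fin d) (Fin d) ℝ) (r : ℝ) :
    (⋃ n ∈ latSet B r, cube n) ⊆ region B (r + rsum B) := by
  intro x hx
  simp only [Set.mem_iUnion, exists_prop] at hx
  obtain ⟨n, hn, hxc⟩ := hx
  rw [mem_cube_iff_floor] at hxc
  have hfr : ∀ i, |x i - (n i : ℝ)| ≤ 1 := by
    intro i
    have h1 : ((n i : ℤ) : ℝ) ≤ x i := by rw [← hxc i]; exact Int.floor_le (x i)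
    have h2 : x i < (n i : ℝ) + 1 := by
      rw [← hxc i]; exact_mod_cast Int.lt_floor_add_one (x i)
    rw [abs_le]; constructor <;> linarith
  have hdiff : e (B.mulVec (x - fun i => (n i : ℝ))) ≤ rsum B := e_mulVec_le B _ (by
    intro i; simpa using hfr i)
  have : e (B.mulVec x) ≤ e (B.mulVec fun i => (n i : ℝ)) + rsum B := by
    have hsplit : B.mulVec x
        = B.mulVec (fun i => (n i : ℝ)) + B.mulVec (x - fun i => (n i : ℝ)) := by
      rw [← Matrix.mulVec_add, add_sub_cancel]
    calc e (B.mulVec x) ≤ e (B.mulVec fun i => (n i : ℝ))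
          + e (B.mulVec (x - fun i => (n i : ℝ))) := by rw [hsplit]; exact e_add_le _ _
      _ ≤ _ := by linarith
  have hn' : e (B.mulVec fun i => (n i : ℝ)) ≤ r := hn
  exact Set.mem_setOf.mpr (this.trans (by linarith))

lemma region_subset_biUnion (B : Matrix (Fin d) (Fin d) ℝ) (r : ℝ) :
    region B (r - rsum B) ⊆ ⋃ n ∈ latSet B r, cube n := by
  intro x hx
  set n : Fin d → ℤ := fun i => ⌊x i⌋ with hn
  have hxc : x ∈ cube n := mem_cube_floor x
  have hfr : ∀ i, |x i - (n i : ℝ)| ≤ 1 := by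
    intro i
    have h1 : ((n i : ℤ) : ℝ) ≤ x i := Int.floor_le (x i)
    have h2 : x i < (n i : ℝ) + 1 := by exact_mod_cast Int.lt_floor_add_one (x i)
    rw [abs_le]; constructor <;> linarith
  have hdiff : e (B.mulVec (x - fun i => (n i : ℝ))) ≤ rsum B := e_mulVec_le B _ (by
    intro i; simpa using hfr i)
  have hmem : n ∈ latSet B r := by
    have hsplit : B.mulVec (fun i => (n i : ℝ))
        = B.mulVec x - B.mulVec (x - fun i => (n i : ℝ)) := by
      rw [← Matrix.mulVec_sub, sub_sub_cancel]
    have : e (B.mulVec fun i => (n i : ℝ)) ≤ e (B.mulVec x) + rsum B := by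
      calc e (B.mulVec fun i => (n i : ℝ))
          ≤ e (B.mulVec x) + e (B.mulVec (x - fun i => (n i : ℝ))) := by
            rw [hsplit]; exact e_sub_le _ _
        _ ≤ _ := by linarith
    have hx' : e (B.mulVec x) ≤ r - rsum B := hx
    exact Set.mem_setOf.mpr (by linarith)
  exact Set.mem_biUnion hmem hxc

lemma ncard_latSet_bounds (B : Matrix (Fin d) (Fin d) ℝ) (hB : IsUnit B.det)
    {r : ℝ} (hr : rsum B < r) :
    (r - rsum B) ^ d * (volume (region B 1)).toReal ≤ ((latSet B r).ncard : ℝ) ∧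
    ((latSet B r).ncard : ℝ) ≤ (r + rsum B) ^ d * (volume (region B 1)).toReal := by
  have hfin := latSet_finite B hB r
  have hvol := volume_biUnion_cube hfin
  have hV1top : volume (region B 1) < ⊤ := by
    rw [volume_region_one B hB]
    exact ENNReal.mul_lt_top ENNReal.ofReal_lt_top (vball_lt_top d)
  constructor
  · have h1 : volume (region B (r - rsum B)) ≤ ((latSet B r).ncard : ENNReal) := by
      rw [← hvol]
      exact measure_mono (region_subset_biUnion B r)
    rw [volume_region_smul B (by linarith : (0:ℝ) < r - rsum B)] at h1
    have := ENNReal.toReal_mono (by simp) h1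
    rw [ENNReal.toReal_mul, ENNReal.toReal_ofReal (pow_nonneg (by linarith) d)] at this
    simpa using this
  · have h1 : ((latSet B r).ncard : ENNReal) ≤ volume (region B (r + rsum B)) := by
      rw [← hvol]
      exact measure_mono (biUnion_subset_region B r)
    have hrs := rsum_nonneg B
    rw [volume_region_smul B (by linarith : (0:ℝ) < r + rsum B)] at h1
    have h2 := ENNReal.toReal_mono
      (ENNReal.mul_ne_top ENNReal.ofReal_ne_top hV1top.ne) h1
    rw [ENNReal.toReal_mul, ENNReal.toReal_ofReal (pow_nonneg (by linarith) d)] at h2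
    simpa using h2


lemma tendsto_shift_ratio (c : ℝ) :
    Tendsto (fun r : ℝ => ((r + c) / r) ^ d) atTop (nhds 1) := by
  have h1 : Tendsto (fun r : ℝ => 1 + c / r) atTop (nhds 1) := by
    have := (tendsto_inv_atTop_zero (𝕜 := ℝ)).const_mul c
    have h0 : Tendsto (fun r : ℝ => c / r) atTop (nhds 0) := by
      simpa [div_eq_mul_inv] using this
    simpa using tendsto_const_nhds.add h0
  have h2 : (fun r : ℝ => ((r + c) / r) ^ d) =ᶠ[atTop] fun r => (1 + c / r) ^ d := by
    filter_upwards [eventually_gt_atTop 0] with r hr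
    rw [add_div, div_self hr.ne']
  rw [show (1:ℝ) = 1 ^ d by simp]
  exact Tendsto.congr' h2.symm (h1.pow d)

lemma count_tendsto (B : Matrix (Fin d) (Fin d) ℝ) (hB : IsUnit B.det) :
    Tendsto (fun r : ℝ => ((latSet B r).ncard : ℝ) / r ^ d) atTop
      (nhds ((volume (region B 1)).toReal) ) := by
  set C := rsum B with hC
  set v := (volume (region B 1)).toReal with hv
  have hv0 : 0 ≤ v := ENNReal.toReal_nonneg
  have hCnn := rsum_nonneg B
  apply tendsto_of_tendsto_of_tendsto_of_le_of_le'
    (g := fun r : ℝ => ((r - C)/r) ^ d * v) (h := fun r : ℝ => ((r + C)/r) ^ d * v)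
  · simpa [sub_eq_add_neg] using (tendsto_shift_ratio (d := d) (-C)).mul_const v
  · simpa using (tendsto_shift_ratio (d := d) C).mul_const v
  · filter_upwards [eventually_gt_atTop (max C 0 + 1)] with r hr
    have hrC : C < r := by have := le_max_left C 0; linarith
    have hr0 : (0:ℝ) < r := by have := le_max_right C 0; linarith
    have := (ncard_latSet_bounds B hB hrC).1
    rw [div_pow, div_mul_eq_mul_div, div_le_div_iff₀ (by positivity) (by positivity)]
    exact mul_le_mul_of_nonneg_right this (by positivity)
  · filter_upwards [eventually_gt_atTop (max C 0 + 1)] with r hr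
    have hrC : C < r := by have := le_max_left C 0; linarith
    have hr0 : (0:ℝ) < r := by have := le_max_right C 0; linarith
    have := (ncard_latSet_bounds B hB hrC).2
    rw [div_pow, div_mul_eq_mul_div, div_le_div_iff₀ (by positivity) (by positivity)]
    exact mul_le_mul_of_nonneg_right this (by positivity)
  
/-- composition with `√E + c` : limit of `F(√E+c)/(√E)^d`. -/
lemma tendsto_comp_sqrt_shift (F : ℝ → ℝ) (v c : ℝ)
    (hF : Tendsto (fun r : ℝ => F r / r ^ d) atTop (nhds v)) :
    Tendsto (fun E : ℝ => F (Real.sqrt E + c) / (Real.sqrt E) ^ d) atTop (nhds v) := by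
  have hsq : Tendsto Real.sqrt atTop atTop := by
    apply tendsto_atTop_atTop_of_monotone (fun a b hab => Real.sqrt_le_sqrt hab)
    intro b
    exact ⟨(max b 0) ^ 2, by
      rw [Real.sqrt_sq (le_max_right b 0)]; exact le_max_left b 0⟩
  have hg : Tendsto (fun E : ℝ => Real.sqrt E + c) atTop atTop :=
    tendsto_atTop_add_const_right _ c hsq
  have h1 : Tendsto (fun E : ℝ => F (Real.sqrt E + c) / (Real.sqrt E + c) ^ d)
      atTop (nhds v) := hF.comp hg
  have h2 : Tendsto (fun E : ℝ => ((Real.sqrt E + c) / Real.sqrt E) ^ d) atTop (nhds 1) :=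
    (tendsto_shift_ratio c).comp hsq
  have := h1.mul h2
  rw [mul_one] at this
  refine this.congr' ?_
  filter_upwards [hsq.eventually (eventually_gt_atTop (max (-c) 0 + 1))] with E hE
  have h3 : (0:ℝ) < Real.sqrt E + c := by
    have := le_max_left (-c) 0; linarith
  have h4 : (0:ℝ) < Real.sqrt E := by
    have := le_max_right (-c) 0; linarith
  field_simp
  rw [div_pow, mul_assoc, div_mul_cancel₀ _ (pow_ne_zero d h4.ne')]



noncomputable def Bmat (A : Matrix (Fin d) (Fin d) ℝ) : Matrix (Fin d) (Fin d) ℝ :=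
  (2 * Real.pi) • (A⁻¹).transpose

lemma Gvec_eq (A : Matrix (Fin d) (Fin d) ℝ) (m : Fin d → ℤ) :
    Gvec A m = (Bmat A).mulVec (fun i => (m i : ℝ)) := by
  rw [Bmat, Matrix.smul_mulVec, Gvec]

lemma sqNorm_eq (v : Fin d → ℝ) : sqNorm v = e v ^ 2 := (sq_e v).symm

lemma Bmat_det (A : Matrix (Fin d) (Fin d) ℝ) :
    (Bmat A).det = (2 * Real.pi) ^ d * (A.det)⁻¹ := by
  rw [Bmat, Matrix.det_smul, Matrix.det_transpose, Matrix.det_nonsing_inv,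
    Ring.inverse_eq_inv', Fintype.card_fin]

lemma Bmat_det_isUnit {A : Matrix (Fin d) (Fin d) ℝ} (hA : IsUnit A.det) :
    IsUnit (Bmat A).det := by
  rw [Bmat_det, isUnit_iff_ne_zero]
  have h1 : A.det ≠ 0 := by
    rw [isUnit_iff_ne_zero] at hA; exact hA
  positivity

lemma Gvec_add (A : Matrix (Fin d) (Fin d) ℝ) (m n : Fin d → ℤ) :
    Gvec A (m + n) = Gvec A m + Gvec A n := by
  simp only [Gvec_eq]
  rw [show (fun i => (((m + n) i : ℤ) : ℝ))
      = (fun i => ((m i : ℤ) : ℝ)) + (fun i => ((n i : ℤ) : ℝ)) by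
    funext i; simp, Matrix.mulVec_add]

lemma Gvec_sub (A : Matrix (Fin d) (Fin d) ℝ) (m n : Fin d → ℤ) :
    Gvec A (m - n) = Gvec A m - Gvec A n := by
  simp only [Gvec_eq]
  rw [show (fun i => (((m - n) i : ℤ) : ℝ))
      = (fun i => ((m i : ℤ) : ℝ)) - (fun i => ((n i : ℤ) : ℝ)) by
    funext i; simp, Matrix.mulVec_sub]

/-- Incommensurability forces trivial intersection of the two reciprocal lattices. -/
lemma inter_trivial {A₁ A₂ : Matrix (Fin d) (Fin d) ℝ} (hinc : Incommensurate A₁ A₂)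
    (m n : Fin d → ℤ) (h : Gvec A₁ m = Gvec A₂ n) : Gvec A₂ n = 0 := by
  set τ := Gvec A₂ n with hτ
  have hrec : ∀ A : Matrix (Fin d) (Fin d) ℝ, recLat A = {x | ∃ p, x = Gvec A p} := fun _ => rfl
  have him : ∀ (A : Matrix (Fin d) (Fin d) ℝ) (k : Fin d → ℤ), τ = Gvec A k →
      (fun x => x + τ) '' recLat A = recLat A := by
    intro A k hk
    ext x
    simp only [hrec, Set.mem_image, Set.mem_setOf_eq]
    constructor
    · rintro ⟨y, ⟨p, rfl⟩, rfl⟩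
      exact ⟨p + k, by rw [Gvec_add, hk]⟩
    · rintro ⟨p, rfl⟩
      exact ⟨Gvec A (p - k), ⟨p - k, rfl⟩, by rw [hk, ← Gvec_add, sub_add_cancel]⟩
  have h1 := him A₁ m h.symm
  have h2 := him A₂ n rfl
  exact hinc τ (by rw [Set.image_union, h1, h2])


section Key
variable (P Q : Matrix (Fin d) (Fin d) ℝ)

/-- coordinates of `G_Q n` in the basis of the `P`-reciprocal lattice. -/
noncomputable def uvec (n : Fin d → ℤ) : Fin d → ℝ :=
  (Bmat P)⁻¹.mulVec ((Bmat Q).mulVec fun i => (n i : ℝ))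

/-- the unique `m` such that `G_P m + G_Q n` lies in the unit cell of `P`. -/
noncomputable def mfun (n : Fin d → ℤ) : Fin d → ℤ := fun i => -⌊uvec P Q n i⌋

noncomputable def Tset (E : ℝ) : Set (Fin d → ℤ) :=
  {n | sqNorm (Gvec P (mfun P Q n)) + sqNorm (Gvec Q n) ≤ 2 * E}

variable {P Q}

lemma phi_eq (hP : IsUnit P.det) (n : Fin d → ℤ) :
    Gvec P (mfun P Q n) + Gvec Q n
      = (Bmat P).mulVec (fun i => Int.fract (uvec P Q n i)) := by
  have hBP := Bmat_det_isUnit hP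
  have h1 : Gvec Q n = (Bmat P).mulVec (uvec P Q n) := by
    rw [uvec, Matrix.mulVec_mulVec, Matrix.mul_nonsing_inv (Bmat P) hBP,
      Matrix.one_mulVec, Gvec_eq]
  rw [Gvec_eq, h1, ← Matrix.mulVec_add,
    show ((fun i => ((mfun P Q n i : ℤ) : ℝ)) + uvec P Q n)
        = (fun i => Int.fract (uvec P Q n i)) by
      funext i
      simp only [Pi.add_apply, Int.fract, mfun]
      push_cast
      ring]

lemma mem_cell_phi (hP : IsUnit P.det) (n : Fin d → ℤ) :
    Gvec P (mfun P Q n) + Gvec Q n ∈ recUnitCell P := by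
  refine ⟨fun i => Int.fract (uvec P Q n i), fun i => ⟨Int.fract_nonneg _, Int.fract_lt_one _⟩, ?_⟩
  rw [phi_eq hP n, Bmat, Matrix.smul_mulVec]

lemma e_phi_le (hP : IsUnit P.det) (n : Fin d → ℤ) :
    e (Gvec P (mfun P Q n) + Gvec Q n) ≤ rsum (Bmat P) := by
  rw [phi_eq hP n]
  apply e_mulVec_le
  intro i
  rw [abs_of_nonneg (Int.fract_nonneg _)]
  exact (Int.fract_lt_one _).le

/-- The cutoff points in the unit cell of `P` are parametrized by `Tset`. -/
lemma cutoff_cell_eq (hP : IsUnit P.det) (E : ℝ) :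
    {x | ∃ m n : Fin d → ℤ, x = Gvec P m + Gvec Q n ∧
        sqNorm (Gvec P m) + sqNorm (Gvec Q n) ≤ 2 * E} ∩ recUnitCell P
      = (fun n => Gvec P (mfun P Q n) + Gvec Q n) '' Tset P Q E := by
  have hBP := Bmat_det_isUnit hP
  ext x
  constructor
  · rintro ⟨⟨m, n, rfl, hbound⟩, α, hα, hxcell⟩
    have hinj : ∀ y z : Fin d → ℝ, (Bmat P).mulVec y = (Bmat P).mulVec z → y = z := by
      intro y z hyz
      have := congrArg ((Bmat P)⁻¹.mulVec) hyz
      rwa [Matrix.mulVec_mulVec, Matrix.mulVec_mulVec, Matrix.nonsing_inv_mul (Bmat P) hBP,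
        Matrix.one_mulVec, Matrix.one_mulVec] at this
    have hGQ : Gvec Q n = (Bmat P).mulVec (uvec P Q n) := by
      rw [uvec, Matrix.mulVec_mulVec, Matrix.mul_nonsing_inv (Bmat P) hBP,
        Matrix.one_mulVec, Gvec_eq]
    have hx2 : (Bmat P).mulVec α
        = (Bmat P).mulVec ((fun i => ((m i : ℤ) : ℝ)) + uvec P Q n) := by
      rw [Matrix.mulVec_add, ← hGQ, ← Gvec_eq, hxcell, Bmat, Matrix.smul_mulVec]
    have hαeq : α = (fun i => ((m i : ℤ) : ℝ)) + uvec P Q n := hinj _ _ hx2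
    have hm : m = mfun P Q n := by
      funext i
      have h1 : α i = (m i : ℝ) + uvec P Q n i := congrFun hαeq i
      have h2 : ⌊α i⌋ = 0 := Int.floor_eq_zero_iff.mpr (hα i)
      have h3 : ⌊uvec P Q n i⌋ = -(m i) := by
        have : uvec P Q n i = α i - (m i : ℝ) := by linarith
        rw [this, Int.floor_sub_intCast, h2, zero_sub]
      simp [mfun, h3]
    refine ⟨n, ?_, ?_⟩
    · rw [Tset, Set.mem_setOf_eq, ← hm]
      exact hbound
    · simp only
      rw [← hm]
  · rintro ⟨n, hn, rfl⟩
    exact ⟨⟨mfun P Q n, n, rfl, hn⟩, mem_cell_phi hP n⟩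

lemma phi_injective (hP : IsUnit P.det) (hQ : IsUnit Q.det)
    (htriv : ∀ m n : Fin d → ℤ, Gvec P m = Gvec Q n → Gvec Q n = 0) :
    Function.Injective (fun n => Gvec P (mfun P Q n) + Gvec Q n) := by
  have hBQ := Bmat_det_isUnit hQ
  intro n n' h
  simp only at h
  have h2 : Gvec P (mfun P Q n - mfun P Q n') = Gvec Q (n' - n) := by
    rw [Gvec_sub, Gvec_sub, sub_eq_sub_iff_add_eq_add, h]
    exact add_comm _ _
  have h3 := htriv _ _ h2
  rw [Gvec_eq] at h3
  have h4 : (fun i => (((n' - n) i : ℤ) : ℝ)) = 0 := by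
    have := congrArg ((Bmat Q)⁻¹.mulVec) h3
    rwa [Matrix.mulVec_mulVec, Matrix.nonsing_inv_mul (Bmat Q) hBQ, Matrix.one_mulVec,
      Matrix.mulVec_zero] at this
  have h5 : n' - n = 0 := by
    funext i
    have := congrFun h4 i
    simp only [Pi.sub_apply, Pi.zero_apply] at this ⊢
    exact_mod_cast this
  have := sub_eq_zero.mp h5
  exact this.symm

lemma Tset_subset (hP : IsUnit P.det) {E : ℝ} (hE : 0 ≤ E) :
    latSet (Bmat Q) (Real.sqrt E - rsum (Bmat P)) ⊆ Tset P Q E ∧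
    Tset P Q E ⊆ latSet (Bmat Q) (Real.sqrt E + rsum (Bmat P)) := by
  set C := rsum (Bmat P) with hC
  have hCnn : 0 ≤ C := rsum_nonneg _
  constructor
  · intro n hn
    have ht : e (Gvec Q n) ≤ Real.sqrt E - C := by
      rw [Gvec_eq]; exact hn
    have ht0 : 0 ≤ e (Gvec Q n) := e_nonneg _
    have hsE : 0 ≤ Real.sqrt E := Real.sqrt_nonneg E
    have hphi := e_phi_le (Q := Q) hP n
    have hGP : e (Gvec P (mfun P Q n)) ≤ C + e (Gvec Q n) := by
      calc e (Gvec P (mfun P Q n))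
          = e ((Gvec P (mfun P Q n) + Gvec Q n) - Gvec Q n) := by rw [add_sub_cancel_right]
        _ ≤ e (Gvec P (mfun P Q n) + Gvec Q n) + e (Gvec Q n) := e_sub_le _ _
        _ ≤ C + e (Gvec Q n) := by linarith
    rw [Tset, Set.mem_setOf_eq, sqNorm_eq, sqNorm_eq]
    have h1 : e (Gvec P (mfun P Q n)) ≤ Real.sqrt E := by linarith
    have h2 : e (Gvec Q n) ≤ Real.sqrt E := by linarith
    have h3 : e (Gvec P (mfun P Q n)) ^ 2 ≤ E := by
      calc e (Gvec P (mfun P Q n)) ^ 2 ≤ Real.sqrt E ^ 2 :=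
            pow_le_pow_left₀ (e_nonneg _) h1 2
        _ = E := Real.sq_sqrt hE
    have h4 : e (Gvec Q n) ^ 2 ≤ E := by
      calc e (Gvec Q n) ^ 2 ≤ Real.sqrt E ^ 2 := pow_le_pow_left₀ ht0 h2 2
        _ = E := Real.sq_sqrt hE
    linarith
  · intro n hn
    rw [Tset, Set.mem_setOf_eq, sqNorm_eq, sqNorm_eq] at hn
    set t := e (Gvec Q n) with htdef
    set s := e (Gvec P (mfun P Q n)) with hsdef
    have ht0 : 0 ≤ t := e_nonneg _
    have hs0 : 0 ≤ s := e_nonneg _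
    have hsE : 0 ≤ Real.sqrt E := Real.sqrt_nonneg E
    have hphi := e_phi_le (Q := Q) hP n
    have htC : t ≤ C + s := by
      calc t = e ((Gvec P (mfun P Q n) + Gvec Q n) - Gvec P (mfun P Q n)) := by
            rw [add_sub_cancel_left]
        _ ≤ e (Gvec P (mfun P Q n) + Gvec Q n) + s := e_sub_le _ _
        _ ≤ C + s := by linarith
    have hgoal : t ≤ Real.sqrt E + C := by
      rcases le_or_gt t C with h | h
      · linarith
      · have h1 : 0 ≤ t - C := by linarith
        have h2 : (t - C) ^ 2 ≤ s ^ 2 := pow_le_pow_left₀ h1 (by linarith) 2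
        have h3 : (t - C) ^ 2 ≤ t ^ 2 := pow_le_pow_left₀ h1 (by linarith) 2
        have h4 : (t - C) ^ 2 ≤ E := by linarith
        have h5 : t - C ≤ Real.sqrt E := (Real.le_sqrt h1 hE).mpr h4
        linarith
    rw [latSet, Set.mem_setOf_eq, ← Gvec_eq]
    exact hgoal

end Key



end CutoffProof

/-- the cutoff wavevector set is finite, and the ratio of the numbers of its
elements lying in the two reciprocal unit cells tends to
`|Γ₁*|/|Γ₂*| = |Γ₂|/|Γ₁| = |det A₂|/|det A₁|` as the cutoff goes to infinity. -/
theorem cutoff_counting_ratio {d : ℕ}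
    (A₁ A₂ : Matrix (Fin d) (Fin d) ℝ) (h₁ : IsUnit A₁.det) (h₂ : IsUnit A₂.det)
    (hinc : Incommensurate A₁ A₂) :
    (∀ E : ℝ, 0 < E → (cutoffSet A₁ A₂ E).Finite) ∧
    Tendsto
      (fun E : ℝ =>
        ((cutoffSet A₁ A₂ E ∩ recUnitCell A₁).ncard : ℝ)
          / ((cutoffSet A₁ A₂ E ∩ recUnitCell A₂).ncard : ℝ))
      atTop (nhds (|A₂.det| / |A₁.det|)) := by
  classical
  open CutoffProof MeasureTheory in
  set B₁ := Bmat A₁ with hB₁def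
  set B₂ := Bmat A₂ with hB₂def
  have hB₁ : IsUnit B₁.det := Bmat_det_isUnit h₁
  have hB₂ : IsUnit B₂.det := Bmat_det_isUnit h₂
  have sqNorm_nonneg : ∀ v : Fin d → ℝ, 0 ≤ sqNorm v :=
    fun v => Finset.sum_nonneg fun i _ => sq_nonneg _
  have e_sqrt : ∀ v : Fin d → ℝ, CutoffProof.e v = Real.sqrt (sqNorm v) := fun v => rfl
  constructor
  · -- finiteness
    intro E hE
    apply Set.Finite.subset
      (Set.Finite.image (fun p : (Fin d → ℤ) × (Fin d → ℤ) => Gvec A₁ p.1 + Gvec A₂ p.2)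
        ((latSet_finite B₁ hB₁ (Real.sqrt (2 * E))).prod
          (latSet_finite B₂ hB₂ (Real.sqrt (2 * E)))))
    rintro x ⟨m, n, rfl, hb⟩
    have hnn1 := sqNorm_nonneg (Gvec A₁ m)
    have hnn2 := sqNorm_nonneg (Gvec A₂ n)
    refine ⟨(m, n), ⟨?_, ?_⟩, rfl⟩
    · show CutoffProof.e (B₁.mulVec fun i => (m i : ℝ)) ≤ _
      rw [← Gvec_eq, e_sqrt]
      exact Real.sqrt_le_sqrt (by linarith)
    · show CutoffProof.e (B₂.mulVec fun i => (n i : ℝ)) ≤ _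
      rw [← Gvec_eq, e_sqrt]
      exact Real.sqrt_le_sqrt (by linarith)
  · -- the limit
    set C₁ := rsum B₁ with hC₁def
    set C₂ := rsum B₂ with hC₂def
    have htriv12 : ∀ m n : Fin d → ℤ, Gvec A₁ m = Gvec A₂ n → Gvec A₂ n = 0 :=
      fun m n h => inter_trivial hinc m n h
    have htriv21 : ∀ m n : Fin d → ℤ, Gvec A₂ m = Gvec A₁ n → Gvec A₁ n = 0 := by
      intro m n h
      have := inter_trivial hinc n m h.symm
      rw [← h, this]
    have hN1 : ∀ E : ℝ, (cutoffSet A₁ A₂ E ∩ recUnitCell A₁).ncard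
        = (Tset A₁ A₂ E).ncard := by
      intro E
      have heq : cutoffSet A₁ A₂ E ∩ recUnitCell A₁
          = (fun n => Gvec A₁ (mfun A₁ A₂ n) + Gvec A₂ n) '' Tset A₁ A₂ E :=
        cutoff_cell_eq (Q := A₂) h₁ E
      rw [heq, Set.ncard_image_of_injective _ (phi_injective h₁ h₂ htriv12)]
    have hN2 : ∀ E : ℝ, (cutoffSet A₁ A₂ E ∩ recUnitCell A₂).ncard
        = (Tset A₂ A₁ E).ncard := by
      intro E
      have hswap : cutoffSet A₁ A₂ E ∩ recUnitCell A₂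
          = {x | ∃ m n : Fin d → ℤ, x = Gvec A₂ m + Gvec A₁ n ∧
              sqNorm (Gvec A₂ m) + sqNorm (Gvec A₁ n) ≤ 2 * E} ∩ recUnitCell A₂ := by
        ext x
        constructor
        · rintro ⟨⟨m, n, rfl, hb⟩, hc⟩
          exact ⟨⟨n, m, add_comm _ _, by linarith⟩, hc⟩
        · rintro ⟨⟨m, n, rfl, hb⟩, hc⟩
          exact ⟨⟨n, m, add_comm _ _, by linarith⟩, hc⟩
      rw [hswap, cutoff_cell_eq (Q := A₁) h₂ E,
        Set.ncard_image_of_injective _ (phi_injective h₂ h₁ htriv21)]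
    have key : ∀ (P Q : Matrix (Fin d) (Fin d) ℝ), IsUnit P.det → IsUnit Q.det →
        ∀ E : ℝ, 1 ≤ E →
        (latSet (Bmat Q) (Real.sqrt E - rsum (Bmat P))).ncard ≤ (Tset P Q E).ncard ∧
        (Tset P Q E).ncard ≤ (latSet (Bmat Q) (Real.sqrt E + rsum (Bmat P))).ncard := by
      intro P Q hP hQ E hE
      obtain ⟨hsub1, hsub2⟩ := Tset_subset (P := P) (Q := Q) hP (by linarith : (0:ℝ) ≤ E)
      have hfin := latSet_finite _ (Bmat_det_isUnit hQ) (Real.sqrt E + rsum (Bmat P))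
      have hTfin := hfin.subset hsub2
      exact ⟨Set.ncard_le_ncard hsub1 hTfin, Set.ncard_le_ncard hsub2 hfin⟩
    set vb := (vball d).toReal with hvbdef
    have hvb : 0 < vb := ENNReal.toReal_pos (vball_pos d).ne' (vball_lt_top d).ne
    have hval : ∀ A : Matrix (Fin d) (Fin d) ℝ, IsUnit A.det →
        (volume (region (Bmat A) 1)).toReal = |(Bmat A).det|⁻¹ * vb := by
      intro A hA
      have hBA := Bmat_det_isUnit hA
      rw [volume_region_one _ hBA, ENNReal.toReal_mul,
        ENNReal.toReal_ofReal (by positivity)]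
    have hdet1 : A₁.det ≠ 0 := by
      intro h; rw [h] at h₁; simp at h₁
    have hdet2 : A₂.det ≠ 0 := by
      intro h; rw [h] at h₂; simp at h₂
    have hdetB1 : |B₁.det| ≠ 0 := by
      rw [abs_ne_zero]; exact isUnit_iff_ne_zero.mp hB₁
    have hdetB2 : |B₂.det| ≠ 0 := by
      rw [abs_ne_zero]; exact isUnit_iff_ne_zero.mp hB₂
    set v₁ := (volume (region B₁ 1)).toReal with hv₁def
    set v₂ := (volume (region B₂ 1)).toReal with hv₂def
    have hv₁pos : 0 < v₁ := by
      rw [hv₁def, hval A₁ h₁]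
      have : 0 < |B₁.det|⁻¹ := by positivity
      positivity
    have hv₂pos : 0 < v₂ := by
      rw [hv₂def, hval A₂ h₂]
      have : 0 < |B₂.det|⁻¹ := by positivity
      positivity
    -- squeeze for N₁
    have hsqueeze : ∀ (P Q : Matrix (Fin d) (Fin d) ℝ) (hP : IsUnit P.det)
        (hQ : IsUnit Q.det),
        Tendsto (fun E : ℝ => ((Tset P Q E).ncard : ℝ) / (Real.sqrt E) ^ d) atTop
          (nhds ((volume (region (Bmat Q) 1)).toReal)) := by
      intro P Q hP hQ
      set C := rsum (Bmat P) with hCdef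
      have hcnt := count_tendsto (Bmat Q) (Bmat_det_isUnit hQ)
      have hlow := tendsto_comp_sqrt_shift
        (fun r => ((latSet (Bmat Q) r).ncard : ℝ)) _ (-C) hcnt
      have hup := tendsto_comp_sqrt_shift
        (fun r => ((latSet (Bmat Q) r).ncard : ℝ)) _ C hcnt
      apply tendsto_of_tendsto_of_tendsto_of_le_of_le'
        (g := fun E : ℝ => ((latSet (Bmat Q) (Real.sqrt E - C)).ncard : ℝ) / (Real.sqrt E) ^ d)
        (h := fun E : ℝ => ((latSet (Bmat Q) (Real.sqrt E + C)).ncard : ℝ) / (Real.sqrt E) ^ d)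
      · exact hlow.congr fun E => by rw [← sub_eq_add_neg]
      · exact hup
      · filter_upwards [eventually_ge_atTop 1] with E hE
        have hs : (0:ℝ) < (Real.sqrt E) ^ d :=
          pow_pos (Real.sqrt_pos.mpr (by linarith)) d
        have hk := (key P Q hP hQ E hE).1
        gcongr
      · filter_upwards [eventually_ge_atTop 1] with E hE
        have hs : (0:ℝ) < (Real.sqrt E) ^ d :=
          pow_pos (Real.sqrt_pos.mpr (by linarith)) d
        have hk := (key P Q hP hQ E hE).2
        gcongr
    have hNlim1 : Tendsto (fun E : ℝ =>
        ((cutoffSet A₁ A₂ E ∩ recUnitCell A₁).ncard : ℝ) / (Real.sqrt E) ^ d) atTop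
        (nhds v₂) := by
      have := hsqueeze A₁ A₂ h₁ h₂
      exact this.congr fun E => by simp only [hN1 E]
    have hNlim2 : Tendsto (fun E : ℝ =>
        ((cutoffSet A₁ A₂ E ∩ recUnitCell A₂).ncard : ℝ) / (Real.sqrt E) ^ d) atTop
        (nhds v₁) := by
      have := hsqueeze A₂ A₁ h₂ h₁
      exact this.congr fun E => by simp only [hN2 E]
    have hratio := hNlim1.div hNlim2 hv₁pos.ne'
    have hfinal : Tendsto (fun E : ℝ =>
        ((cutoffSet A₁ A₂ E ∩ recUnitCell A₁).ncard : ℝ)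
          / ((cutoffSet A₁ A₂ E ∩ recUnitCell A₂).ncard : ℝ)) atTop (nhds (v₂ / v₁)) := by
      refine hratio.congr' ?_
      filter_upwards [eventually_ge_atTop 1] with E hE
      have hs : ((Real.sqrt E) ^ d : ℝ) ≠ 0 :=
        (pow_pos (Real.sqrt_pos.mpr (by linarith)) d).ne'
      have habc : ∀ a b s : ℝ, s ≠ 0 → a / s / (b / s) = a / b := by
        intro a b s hs'
        rw [div_div_div_comm, div_self hs', div_one]
      exact habc _ _ _ hs
    have hvval : v₂ / v₁ = |A₂.det| / |A₁.det| := by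
      rw [hv₁def, hv₂def, hval A₁ h₁, hval A₂ h₂]
      rw [Bmat_det, Bmat_det]
      have h2π : (0:ℝ) < (2 * Real.pi) ^ d := by positivity
      rw [abs_mul, abs_mul, abs_inv, abs_inv, abs_pow, abs_of_pos (by positivity : (0:ℝ) < 2 * Real.pi)]
      have ha1 : |A₁.det| ≠ 0 := abs_ne_zero.mpr hdet1
      have ha2 : |A₂.det| ≠ 0 := abs_ne_zero.mpr hdet2
      field_simp
    rw [← hvval]
    exact hfinal
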